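/- For n ≥ 3 and any X ∈ SO(n), there exists Y ∈ SO(n) with Y ≠ X and det(X − Y) = 0. Consequently SO(n) ∩ ℰ_{SO(n)} = ∅ for every K ≥ 1, where ℰ_{SO(n)} = {X ∈ ℝⁿˣⁿ : ‖A − X‖ⁿ ≤ K det(A − X) for all A ∈ SO(n)}. -/

import Mathlib

open Matrix

/-- Operator (ℓ²→ℓ²) norm of a real n×n matrix. -/
noncomputable def opNormN {n : ℕ} (A : Matrix (Fin n) (Fin n) ℝ) : ℝ :=
  ‖Matrix.toEuclideanCLM (𝕜 := ℝ) A‖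

/-- The rotation group SO(n) as a set of n×n real matrices. -/
def SOn (n : ℕ) : Set (Matrix (Fin n) (Fin n) ℝ) := {A | A * Aᵀ = 1 ∧ A.det = 1}

lemma aux_main (n : ℕ) (hn : 3 ≤ n) :
    ∀ X ∈ SOn n, ∃ Y ∈ SOn n, Y ≠ X ∧ (X - Y).det = 0 := by
  intro X hX
  obtain ⟨hXo, hXd⟩ := hX
  set d : Fin n → ℝ := fun i => if (i : ℕ) < 2 then -1 else 1 with hd
  set R : Matrix (Fin n) (Fin n) ℝ := Matrix.diagonal d with hR
  have hRR : R * Rᵀ = 1 := by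
    rw [hR, Matrix.diagonal_transpose, Matrix.diagonal_mul_diagonal]
    have h1 : (fun i => d i * d i) = fun _ => (1 : ℝ) := by
      funext i
      by_cases h : (i : ℕ) < 2 <;> simp only [hd, h, if_true, if_false] <;> norm_num
    rw [h1]
    exact Matrix.diagonal_one
  have hfilter : (Finset.univ.filter (fun i : Fin n => (i : ℕ) < 2)) =
      {(⟨0, by omega⟩ : Fin n), ⟨1, by omega⟩} := by
    ext i
    simp [Fin.ext_iff]
    omega
  have hdetR : R.det = 1 := by
    rw [hR, Matrix.det_diagonal,
      ← Finset.prod_filter_mul_prod_filter_not Finset.univ (fun i : Fin n => (i : ℕ) < 2)]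
    have h1 : ∏ i ∈ Finset.univ.filter (fun i : Fin n => (i : ℕ) < 2), d i = 1 := by
      rw [hfilter, Finset.prod_pair (by simp [Fin.ext_iff])]
      simp [hd]
    have h2 : ∏ i ∈ Finset.univ.filter (fun i : Fin n => ¬ (i : ℕ) < 2), d i = 1 := by
      apply Finset.prod_eq_one
      intro i hi
      simp only [Finset.mem_filter] at hi
      simp [hd, hi.2]
      intro h
      exact absurd (by omega) hi.2
    rw [h1, h2, mul_one]
  refine ⟨X * R, ⟨?_, ?_⟩, ?_, ?_⟩
  · rw [Matrix.transpose_mul, ← Matrix.mul_assoc, Matrix.mul_assoc X R, hRR,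
      Matrix.mul_one, hXo]
  · rw [Matrix.det_mul, hXd, hdetR, mul_one]
  · intro h
    have hXtX : Xᵀ * X = 1 := mul_eq_one_comm.mp hXo
    have hR1 : R = 1 := by
      have := congrArg (fun M => Xᵀ * M) h
      simpa [← Matrix.mul_assoc, hXtX] using this
    have : R ⟨0, by omega⟩ ⟨0, by omega⟩ = (1 : Matrix (Fin n) (Fin n) ℝ) ⟨0, by omega⟩ ⟨0, by omega⟩ := by rw [hR1]
    simp [hR, hd, Matrix.one_apply] at this
    norm_num at this
  · have : X - X * R = X * (1 - R) := by noncomm_ring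
    rw [this, Matrix.det_mul, hXd, one_mul]
    have : (1 : Matrix (Fin n) (Fin n) ℝ) - R = Matrix.diagonal (fun i => 1 - d i) := by
      rw [hR, ← Matrix.diagonal_one, Matrix.diagonal_sub]
    rw [this, Matrix.det_diagonal]
    apply Finset.prod_eq_zero (Finset.mem_univ (⟨2, by omega⟩ : Fin n))
    simp [hd]

theorem stmt19 (n : ℕ) (hn : 3 ≤ n) :
    (∀ X ∈ SOn n, ∃ Y ∈ SOn n, Y ≠ X ∧ (X - Y).det = 0) ∧
      ∀ K : ℝ, 1 ≤ K →
        SOn n ∩ {X : Matrix (Fin n) (Fin n) ℝ |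
          ∀ A ∈ SOn n, opNormN (A - X) ^ n ≤ K * (A - X).det} = ∅ := by
  refine ⟨aux_main n hn, ?_⟩
  intro K _
  rw [Set.eq_empty_iff_forall_notMem]
  rintro X ⟨hX, hE⟩
  obtain ⟨Y, hY, hYX, hdet⟩ := aux_main n hn X hX
  have hdet' : (Y - X).det = 0 := by
    rw [← neg_sub X Y, Matrix.det_neg, hdet, mul_zero]
  have hle := hE Y hY
  rw [hdet', mul_zero] at hle
  have hne : Y - X ≠ 0 := sub_ne_zero.mpr hYX
  have hpos : 0 < opNormN (Y - X) := by
    rw [opNormN, norm_pos_iff]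
    intro h
    apply hne
    have h2 := congrArg (Matrix.toEuclideanCLM (𝕜 := ℝ) (n := Fin n)).symm h
    simpa using h2
  have := pow_pos hpos n
  linarith
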